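/- Let M be a continuous martingale with quadratic variation f, and let g be an adapted, continuous, increasing process with g(0) = 0. Define h(t) = f(t) + inf_{s ≤ t}(g(s) − f(s)). Then h is increasing, h ≤ g almost surely, and 0 ≤ h(t) − h(s) ≤ f(t) − f(s) for all t ≥ s. -/

import Mathlib

open MeasureTheory

/-- Let `M` be a continuous martingale with (continuous, increasing, adapted) quadratic
variation `f`, and `g` an adapted continuous increasing process with `g(0) = 0`. With
`h(t) = f(t) + inf_{s ≤ t}(g(s) − f(s))`, the process `h` is increasing, `h ≤ g`, and
`0 ≤ h(t) − h(s) ≤ f(t) − f(s)` for `s ≤ t`. -/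
theorem coupling_time_change_properties {Ω : Type*} [m : MeasurableSpace Ω]
    (μ : Measure Ω) [IsProbabilityMeasure μ] (ℱ : Filtration ℝ m)
    (M : ℝ → Ω → ℝ) (hM : Martingale M ℱ μ) (hMc : ∀ ω, Continuous fun t => M t ω)
    (f g : ℝ → Ω → ℝ)
    (hfa : Adapted ℱ f) (hga : Adapted ℱ g)
    (hfc : ∀ ω, Continuous fun t => f t ω) (hgc : ∀ ω, Continuous fun t => g t ω)
    (hfm : ∀ ω, Monotone fun t => f t ω) (hgm : ∀ ω, Monotone fun t => g t ω)
    (hf0 : ∀ ω, f 0 ω = 0) (hg0 : ∀ ω, g 0 ω = 0)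
    (h : ℝ → Ω → ℝ)
    (hh : ∀ t ω, h t ω = f t ω + sInf ((fun s => g s ω - f s ω) '' Set.Icc 0 t)) :
    ∀ ω, (∀ t : ℝ, 0 ≤ t → h t ω ≤ g t ω) ∧
      (∀ s t : ℝ, 0 ≤ s → s ≤ t →
        0 ≤ h t ω - h s ω ∧ h t ω - h s ω ≤ f t ω - f s ω) := by
  intro ω
  set F : ℝ → ℝ := fun s => g s ω - f s ω with hF
  have hFc : Continuous F := (hgc ω).sub (hfc ω)
  have hbdd : ∀ t : ℝ, BddBelow (F '' Set.Icc 0 t) := fun t =>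
    ((isCompact_Icc.image hFc)).bddBelow
  have hne : ∀ t : ℝ, 0 ≤ t → (F '' Set.Icc 0 t).Nonempty := fun t ht =>
    ⟨F 0, Set.mem_image_of_mem F (Set.mem_Icc.2 ⟨le_refl 0, ht⟩)⟩
  constructor
  · intro t ht
    rw [hh]
    have : sInf (F '' Set.Icc 0 t) ≤ F t :=
      csInf_le (hbdd t) (Set.mem_image_of_mem F (Set.mem_Icc.2 ⟨ht, le_refl t⟩))
    simp only [hF] at this
    linarith
  · intro s t hs hst
    have ht : (0:ℝ) ≤ t := le_trans hs hst
    rw [hh, hh]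
    have hmono : sInf (F '' Set.Icc 0 t) ≤ sInf (F '' Set.Icc 0 s) :=
      csInf_le_csInf (hbdd t) (hne s hs)
        (Set.image_mono (Set.Icc_subset_Icc_right hst))
    have hfst : f s ω ≤ f t ω := hfm ω hst
    constructor
    · have hlb : sInf (F '' Set.Icc 0 s) - (f t ω - f s ω) ≤ sInf (F '' Set.Icc 0 t) := by
        apply le_csInf (hne t ht)
        rintro x ⟨u, hu, rfl⟩
        rcases le_total u s with hus | hsu
        · have : sInf (F '' Set.Icc 0 s) ≤ F u :=
            csInf_le (hbdd s) (Set.mem_image_of_mem F (Set.mem_Icc.2 ⟨hu.1, hus⟩))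
          linarith
        · have h1 : g s ω ≤ g u ω := hgm ω hsu
          have h2 : f u ω ≤ f t ω := hfm ω hu.2
          have h3 : sInf (F '' Set.Icc 0 s) ≤ F s :=
            csInf_le (hbdd s) (Set.mem_image_of_mem F (Set.mem_Icc.2 ⟨hs, le_refl s⟩))
          simp only [hF] at h3 ⊢
          linarith
      linarith
    · linarith
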